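/- Let d ≥ 1 and let α : Fin d → ℝ satisfy α_i > 1 and α_i ∉ ℤ for all i. Set p₀ = (ln d) / (min_{1 ≤ i ≤ d} ln(α_i/⌊α_i⌋)). Then for every real p ≥ max(p₀, 1), the integer hull of the L_p-ball coincides with that of the box: conv(K_p(α) ∩ ℤ^d) = conv(K_∞(α) ∩ ℤ^d), where conv denotes the convex hull in ℝ^d. -/
import Mathlib


open scoped Pointwise

noncomputable section

/-- The integer lattice `ℤ^d` inside `ℝ^d` (with the Euclidean structure). -/
def intLattice (d : ℕ) : Set (EuclideanSpace ℝ (Fin d)) :=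
  {x | ∀ i, ∃ n : ℤ, x i = n}

/-- The lattice point enumerator `G(K) = |K ∩ ℤ^d|`. -/
def latticeCount {d : ℕ} (K : Set (EuclideanSpace ℝ (Fin d))) : ℕ :=
  (K ∩ intLattice d).ncard

/-- The `i`-th successive minimum of `K` with respect to `ℤ^d`:
`λ_i(K) = inf {λ > 0 : dim span((λ•K) ∩ ℤ^d) ≥ i}`. -/
def succMin {d : ℕ} (K : Set (EuclideanSpace ℝ (Fin d))) (i : ℕ) : ℝ :=
  sInf {lam : ℝ | 0 < lam ∧
    i ≤ Module.finrank ℝ (Submodule.span ℝ ((lam • K) ∩ intLattice d))}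

/-- Operator norm of a `d × d` real matrix acting on Euclidean `ℝ^d`. -/
def matOpNorm {d : ℕ} (A : Matrix (Fin d) (Fin d) ℝ) : ℝ :=
  ‖Matrix.toEuclideanCLM (𝕜 := ℝ) A‖

/-- Stability of the integer hull: for `p ≥ max (ln d / min_i ln(α i / ⌊α i⌋)) 1`, the
integer hull of the `L_p`-ball coincides with that of the box. -/
theorem Lp_ball_same_integer_hull (d : ℕ) (hd : 0 < d)
    (α : Fin d → ℝ) (hα1 : ∀ i, 1 < α i) (hαint : ∀ i, ¬∃ n : ℤ, α i = (n : ℝ))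
    (p : ℝ)
    (hp : max (Real.log d /
        Finset.univ.inf' (Finset.univ_nonempty_iff.mpr ⟨⟨0, hd⟩⟩)
          (fun i => Real.log (α i / (⌊α i⌋ : ℝ)))) 1 ≤ p) :
    convexHull ℝ
        ({x : EuclideanSpace ℝ (Fin d) | ∑ i, |x i / α i| ^ p ≤ 1} ∩ intLattice d) =
      convexHull ℝ
        ({x : EuclideanSpace ℝ (Fin d) | ∀ i, |x i| ≤ α i} ∩ intLattice d) := by
  have hp1 : (1 : ℝ) ≤ p := le_trans (le_max_right _ _) hp
  have hp0 : (0 : ℝ) < p := lt_of_lt_of_le one_pos hp1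
  set m : ℝ := Finset.univ.inf' (Finset.univ_nonempty_iff.mpr ⟨⟨0, hd⟩⟩)
      (fun i => Real.log (α i / (⌊α i⌋ : ℝ))) with hm_def
  have hα0 : ∀ i, (0 : ℝ) < α i := fun i => lt_trans one_pos (hα1 i)
  have hfl0 : ∀ i, (0 : ℝ) < (⌊α i⌋ : ℝ) := by
    intro i
    have : (1 : ℤ) ≤ ⌊α i⌋ := Int.le_floor.mpr (by exact_mod_cast (hα1 i).le)
    exact_mod_cast lt_of_lt_of_le zero_lt_one (by exact_mod_cast this)
  have hflt : ∀ i, (⌊α i⌋ : ℝ) < α i := by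
    intro i
    exact lt_of_le_of_ne (Int.floor_le _) (fun h => hαint i ⟨⌊α i⌋, h.symm⟩)
  have hratio : ∀ i, (1 : ℝ) < α i / (⌊α i⌋ : ℝ) := fun i =>
    (one_lt_div (hfl0 i)).mpr (hflt i)
  have hm : 0 < m := by
    rw [hm_def]
    exact (Finset.lt_inf'_iff _).mpr (fun i _ => Real.log_pos (hratio i))
  have hld : Real.log d ≤ p * m := by
    have := le_trans (le_max_left _ _) hp
    exact (div_le_iff₀ hm).mp this
  have key : ({x : EuclideanSpace ℝ (Fin d) | ∑ i, |x i / α i| ^ p ≤ 1} ∩ intLattice d) =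
      ({x : EuclideanSpace ℝ (Fin d) | ∀ i, |x i| ≤ α i} ∩ intLattice d) := by
    ext x
    simp only [Set.mem_inter_iff, Set.mem_setOf_eq]
    constructor
    · rintro ⟨hsum, hlat⟩
      refine ⟨fun i => ?_, hlat⟩
      have h1 : |x i / α i| ^ p ≤ 1 := by
        refine le_trans (Finset.single_le_sum
          (f := fun j => |x j / α j| ^ p)
          (fun j _ => Real.rpow_nonneg (abs_nonneg _) p) (Finset.mem_univ i)) hsum
      have h2 : |x i / α i| ≤ 1 := by
        by_contra h
        push_neg at h
        have := (Real.one_lt_rpow_iff_of_pos (lt_trans one_pos h)).mpr (Or.inl ⟨h, hp0⟩)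
        linarith
      rw [abs_div, abs_of_pos (hα0 i)] at h2
      exact (div_le_one (hα0 i)).mp h2
    · rintro ⟨hbox, hlat⟩
      refine ⟨?_, hlat⟩
      have hd' : (0:ℝ) < d := by exact_mod_cast hd
      have hterm : ∀ i, |x i / α i| ^ p ≤ 1 / d := by
        intro i
        obtain ⟨n, hn⟩ := hlat i
        have hxf : |x i| ≤ (⌊α i⌋ : ℝ) := by
          have h1 : |n| ≤ ⌊α i⌋ := Int.le_floor.mpr (by rw [Int.cast_abs, ← hn]; exact hbox i)
          calc |x i| = ((|n| : ℤ) : ℝ) := by rw [hn, Int.cast_abs]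
            _ ≤ ((⌊α i⌋ : ℤ) : ℝ) := by exact_mod_cast h1
        have h2 : |x i / α i| ≤ (⌊α i⌋ : ℝ) / α i := by
          rw [abs_div, abs_of_pos (hα0 i)]
          gcongr
          exact (hα0 i).le
        have h3 : |x i / α i| ^ p ≤ ((⌊α i⌋ : ℝ) / α i) ^ p :=
          Real.rpow_le_rpow (abs_nonneg _) h2 hp0.le
        refine h3.trans ?_
        have hbpos : (0:ℝ) < α i / (⌊α i⌋ : ℝ) := div_pos (hα0 i) (hfl0 i)
        have hb : ((⌊α i⌋ : ℝ) / α i) = (α i / (⌊α i⌋ : ℝ))⁻¹ := by rw [inv_div]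
        rw [hb, Real.inv_rpow hbpos.le, one_div]
        have hdle : (d:ℝ) ≤ (α i / (⌊α i⌋ : ℝ)) ^ p := by
          have hlogb : m ≤ Real.log (α i / (⌊α i⌋ : ℝ)) :=
            Finset.inf'_le _ (Finset.mem_univ i)
          have hlog2 : Real.log d ≤ p * Real.log (α i / (⌊α i⌋ : ℝ)) := by nlinarith
          calc (d:ℝ) = Real.exp (Real.log d) := (Real.exp_log hd').symm
            _ ≤ Real.exp (p * Real.log (α i / (⌊α i⌋ : ℝ))) := Real.exp_le_exp.mpr hlog2
            _ = (α i / (⌊α i⌋ : ℝ)) ^ p := by rw [Real.rpow_def_of_pos hbpos p, mul_comm]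
        exact inv_anti₀ hd' hdle
      calc ∑ i, |x i / α i| ^ p ≤ ∑ _i : Fin d, (1 : ℝ) / d :=
            Finset.sum_le_sum (fun i _ => hterm i)
        _ = d * (1 / d) := by rw [Finset.sum_const, Finset.card_univ, Fintype.card_fin,
              nsmul_eq_mul]
        _ = 1 := by field_simp
  rw [key]
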